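/- Let C be a self-dual binary [n, n/2, d] code with an automorphism σ of odd prime order p having c cycles of length p and f fixed points, where c = f and p + c < d. Then no such automorphism exists; i.e., a self-dual code of minimum distance d admits no automorphism of type p-(c;c) with p + c < d. -/

import Mathlib

open Finset

/-- A binary self-dual code with minimum distance `d` admits no automorphism of odd
prime order `p` with `c` `p`-cycles and `c` fixed points whenever `p + c < d`. -/
theorem stmt_15 (n p c d : ℕ) (hp : p.Prime) (hodd : Odd p)
    (C : Submodule (ZMod 2) (Fin n → ZMod 2))
    (hsd : ∀ x, x ∈ C ↔ ∀ y ∈ C, ∑ i, x i * y i = 0)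
    (hmin : IsLeast {w : ℕ | ∃ v ∈ C, v ≠ 0 ∧ hammingNorm v = w} d)
    (σ : Equiv.Perm (Fin n)) (hσC : ∀ v ∈ C, v ∘ σ ∈ C)
    (hord : orderOf σ = p)
    (hfix : Nat.card {i : Fin n // σ i = i} = c)
    (hn : n = p * c + c)
    (hlt : p + c < d) :
    False := by
  classical
  have hp1 : 1 < p := hp.one_lt
  have hσp : σ ^ p = 1 := by rw [← hord]; exact pow_orderOf_eq_one σ
  -- the orbit setoid
  let s : Setoid (Fin n) :=
    { r := fun i j => ∃ k : ℕ, (σ ^ k) i = j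
      iseqv := by
        constructor
        · exact fun i => ⟨0, rfl⟩
        · rintro i j ⟨k, rfl⟩
          refine ⟨k * (p - 1), ?_⟩
          have h1 : (σ ^ (k * (p - 1))) ((σ ^ k) i) = (σ ^ (k * (p - 1) + k)) i := by
            rw [pow_add, Equiv.Perm.mul_apply]
          have h2 : k * (p - 1) + k = p * k := by
            have hpp : p - 1 + 1 = p := by omega
            calc k * (p - 1) + k = k * ((p - 1) + 1) := (Nat.mul_succ _ _).symm
              _ = k * p := by rw [hpp]
              _ = p * k := Nat.mul_comm _ _
          rw [h1, h2, pow_mul, hσp, one_pow]; rfl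
        · rintro i j l ⟨k, rfl⟩ ⟨m, rfl⟩
          exact ⟨m + k, by rw [pow_add, Equiv.Perm.mul_apply]⟩ }
  let mkq : Fin n → Quotient s := Quotient.mk s
  have hmkpow : ∀ (k : ℕ) (i : Fin n), mkq ((σ ^ k) i) = mkq i := by
    intro k i
    refine (Quotient.sound ?_).symm
    exact ⟨k, rfl⟩
  have hσfix_all : ∀ i, σ i = i → ∀ m : ℕ, (σ ^ m) i = i := by
    intro i hi m
    induction m with
    | zero => rfl
    | succ m ih => rw [pow_succ, Equiv.Perm.mul_apply, hi, ih]
  have hfixcl : ∀ i j : Fin n, mkq i = mkq j → σ j = j → i = j := by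
    intro i j h hj
    obtain ⟨k, hk⟩ := Quotient.exact h.symm
    rw [← hk, hσfix_all j hj k]
  have hout : ∀ ω : Quotient s, mkq ω.out = ω := fun ω => Quotient.out_eq ω
  have hmoved : ∀ i : Fin n, σ i ≠ i → ∀ m, 0 < m → m < p → (σ ^ m) i ≠ i := by
    intro i hi m hm0 hmp hfx
    have hnd : ¬ p ∣ m := Nat.not_dvd_of_pos_of_lt hm0 hmp
    have hcop : Nat.Coprime m p := ((Nat.Prime.coprime_iff_not_dvd hp).mpr hnd).symm
    obtain ⟨a, -, ha⟩ := Nat.exists_mul_mod_eq_one_of_coprime hcop hp1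
    have h1 : ∀ t : ℕ, (σ ^ (m * t)) i = i := by
      intro t
      induction t with
      | zero => simp
      | succ t ih => rw [Nat.mul_succ, pow_add, Equiv.Perm.mul_apply, hfx, ih]
    have h2 : σ i = i := by
      have h3 : σ ^ (m * a % orderOf σ) = σ ^ (m * a) := pow_mod_orderOf σ (m * a)
      rw [hord, ha, pow_one] at h3
      rw [h3]
      exact h1 a
    exact hi h2
  -- orbits as finsets
  let orb : Fin n → Finset (Fin n) := fun i => (Finset.range p).image fun k => (σ ^ k) i
  have horbcard : ∀ i, σ i ≠ i → (orb i).card = p := by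
    intro i hi
    have hinj : Set.InjOn (fun k => (σ ^ k) i) ↑(Finset.range p) := by
      have step : ∀ k l, l ≤ k → k < p → (σ ^ k) i = (σ ^ l) i → k = l := by
        intro k l hlk hkp he
        have h3 : (σ ^ l) ((σ ^ (k - l)) i) = (σ ^ l) i := by
          rw [← Equiv.Perm.mul_apply, ← pow_add, Nat.add_sub_cancel' hlk]
          exact he
        have h4 : (σ ^ (k - l)) i = i := (σ ^ l).injective h3
        by_contra hne
        exact hmoved i hi (k - l) (by omega) (by omega) h4
      intro k hk l hl hkl
      simp only [Finset.coe_range, Set.mem_Iio] at hk hl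
      rcases le_total l k with h | h
      · exact step k l h hk hkl
      · exact (step l k h hl hkl.symm).symm
    rw [Finset.card_image_of_injOn hinj, Finset.card_range]
  have hfiber : ∀ i : Fin n, Finset.univ.filter (fun j => mkq j = mkq i) = orb i := by
    intro i
    ext j
    simp only [Finset.mem_filter, Finset.mem_univ, true_and, orb, Finset.mem_image,
      Finset.mem_range]
    constructor
    · intro h
      obtain ⟨k, hk⟩ := Quotient.exact h.symm
      refine ⟨k % p, Nat.mod_lt _ hp.pos, ?_⟩
      have h5 : σ ^ (k % orderOf σ) = σ ^ k := pow_mod_orderOf σ k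
      rw [hord] at h5
      rw [h5, hk]
    · rintro ⟨k, hk, rfl⟩
      exact hmkpow k i
  have hfiber_fix : ∀ i : Fin n, σ i = i →
      Finset.univ.filter (fun j => mkq j = mkq i) = {i} := by
    intro i hi
    ext j
    simp only [Finset.mem_filter, Finset.mem_univ, true_and, Finset.mem_singleton]
    exact ⟨fun h => hfixcl j i h hi, fun h => by rw [h]⟩
  -- counting
  let Fixs : Finset (Fin n) := Finset.univ.filter fun i => σ i = i
  have hFixc : Fixs.card = c := by
    rw [← hfix, Nat.card_eq_fintype_card, Fintype.card_subtype]
  let fixΩ : Finset (Quotient s) := Finset.univ.filter fun ω => σ ω.out = ω.out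
  let movΩ : Finset (Quotient s) := Finset.univ.filter fun ω => ¬ σ ω.out = ω.out
  have hmovcl : ∀ i : Fin n, σ i ≠ i → ¬ σ (mkq i).out = (mkq i).out := by
    intro i hi hfx
    have h1 : i = (mkq i).out := hfixcl i (mkq i).out (hout (mkq i)).symm hfx
    rw [← h1] at hfx
    exact hi hfx
  have hfixΩc : fixΩ.card = c := by
    rw [← hFixc]
    apply Finset.card_bij (fun ω _ => ω.out)
    · intro ω hω
      exact Finset.mem_filter.mpr ⟨Finset.mem_univ _, (Finset.mem_filter.mp hω).2⟩
    · intro ω1 h1 ω2 h2 he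
      rw [← hout ω1, ← hout ω2, he]
    · intro i hi
      have hfxi := (Finset.mem_filter.mp hi).2
      have h1 : (mkq i).out = i := hfixcl (mkq i).out i (hout (mkq i)) hfxi
      refine ⟨mkq i, Finset.mem_filter.mpr ⟨Finset.mem_univ _, ?_⟩, h1⟩
      rw [h1]; exact hfxi
  have hmovΩc : movΩ.card = c := by
    have hcount : (Finset.univ : Finset (Fin n)).card =
        ∑ ω : Quotient s, (Finset.univ.filter fun i => mkq i = ω).card :=
      Finset.card_eq_sum_card_fiberwise (fun i _ => Finset.mem_univ _)
    rw [Finset.card_univ, Fintype.card_fin] at hcount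
    have hsplit := Finset.sum_filter_add_sum_filter_not Finset.univ
      (fun ω : Quotient s => σ ω.out = ω.out)
      (fun ω => (Finset.univ.filter fun i => mkq i = ω).card)
    have hfib1 : ∀ ω ∈ fixΩ, (Finset.univ.filter fun i => mkq i = ω).card = 1 := by
      intro ω hω
      have h := (Finset.mem_filter.mp hω).2
      have h2 : (Finset.univ.filter fun i => mkq i = ω) = {ω.out} := by
        conv_lhs => rw [← hout ω]
        exact hfiber_fix ω.out h
      rw [h2, Finset.card_singleton]
    have hfibp : ∀ ω ∈ movΩ, (Finset.univ.filter fun i => mkq i = ω).card = p := by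
      intro ω hω
      have h := (Finset.mem_filter.mp hω).2
      have h2 : (Finset.univ.filter fun i => mkq i = ω) = orb ω.out := by
        conv_lhs => rw [← hout ω]
        exact hfiber ω.out
      rw [h2, horbcard ω.out h]
    rw [Finset.sum_congr rfl hfib1, Finset.sum_congr rfl hfibp, Finset.sum_const,
      Finset.sum_const, smul_eq_mul, mul_one, smul_eq_mul] at hsplit
    rw [← hsplit, hfixΩc] at hcount
    have : movΩ.card * p = c * p := by
      have := hcount
      nlinarith [hn]
    exact Nat.eq_of_mul_eq_mul_right hp.pos this
  have hΩcard : Fintype.card (Quotient s) = 2 * c := by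
    rw [← Finset.card_univ,
      ← Finset.card_filter_add_card_filter_not (s := Finset.univ)
        (p := fun ω : Quotient s => σ ω.out = ω.out)]
    rw [show (Finset.univ.filter fun ω : Quotient s => σ ω.out = ω.out) = fixΩ from rfl]
    rw [show (Finset.univ.filter fun ω : Quotient s => ¬ σ ω.out = ω.out) = movΩ from rfl]
    omega
  -- the averaged-sum identity
  have hodd1 : ∀ (m : ℕ), m % 2 = 1 → ((m : ZMod 2)) = 1 := by
    intro m hm
    rw [← ZMod.natCast_mod, hm, Nat.cast_one]
  have hsum : ∀ F : Quotient s → ZMod 2, ∑ i : Fin n, F (mkq i) = ∑ ω : Quotient s, F ω := by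
    intro F
    rw [← Finset.sum_fiberwise_of_maps_to (fun i (_ : i ∈ Finset.univ) => Finset.mem_univ (mkq i))
      (fun i => F (mkq i))]
    apply Finset.sum_congr rfl
    intro ω _
    have hconst : ∑ i ∈ Finset.univ.filter (fun i => mkq i = ω), F (mkq i) =
        (Finset.univ.filter fun i => mkq i = ω).card • F ω := by
      rw [Finset.sum_congr rfl (fun i hi => by rw [(Finset.mem_filter.mp hi).2]),
        Finset.sum_const]
    rw [hconst, nsmul_eq_mul]
    have hcardodd : (Finset.univ.filter fun i => mkq i = ω).card % 2 = 1 := by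
      by_cases h : σ ω.out = ω.out
      · have h2 : (Finset.univ.filter fun i => mkq i = ω) = {ω.out} := by
          conv_lhs => rw [← hout ω]
          exact hfiber_fix ω.out h
        rw [h2, Finset.card_singleton]
      · have h2 : (Finset.univ.filter fun i => mkq i = ω) = orb ω.out := by
          conv_lhs => rw [← hout ω]
          exact hfiber ω.out
        rw [h2, horbcard ω.out h]
        exact Nat.odd_iff.mp hodd
    rw [hodd1 _ hcardodd, one_mul]
  -- linear algebra setup
  let L : (Quotient s → ZMod 2) →ₗ[ZMod 2] (Fin n → ZMod 2) :=
    LinearMap.funLeft (ZMod 2) (ZMod 2) mkq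
  have hLapp : ∀ (u : Quotient s → ZMod 2) (i : Fin n), L u i = u (mkq i) := fun u i => rfl
  let U : Submodule (ZMod 2) (Quotient s → ZMod 2) := C.comap L
  have hUmem : ∀ u, u ∈ U ↔ L u ∈ C := fun u => Iff.rfl
  let B : LinearMap.BilinForm (ZMod 2) (Quotient s → ZMod 2) :=
    LinearMap.mk₂ (ZMod 2) (fun u w => ∑ ω, u ω * w ω)
      (fun u u' w => by simp [add_mul, Finset.sum_add_distrib])
      (fun a u w => by simp [Finset.mul_sum, mul_assoc])
      (fun u w w' => by simp [mul_add, Finset.sum_add_distrib])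
      (fun a u w => by simp [Finset.mul_sum, mul_left_comm])
  have hBapp : ∀ u w, B u w = ∑ ω, u ω * w ω := fun u w => rfl
  have hBsum : ∀ u w, B u w = ∑ i, L u i * L w i := fun u w =>
    (hsum fun ω => u ω * w ω).symm
  have hBrefl : B.IsRefl := by
    intro u w h
    rw [hBapp] at h ⊢
    rw [show ∑ ω, w ω * u ω = ∑ ω, u ω * w ω from Finset.sum_congr rfl
      fun ω _ => mul_comm _ _]
    exact h
  have hBnd : B.Nondegenerate := by
    refine (LinearMap.IsRefl.nondegenerate_iff_separatingLeft hBrefl).mpr ?_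
    intro u hu
    funext ω
    have h := hu (Pi.single ω 1)
    rw [hBapp] at h
    simpa [Pi.single_apply, mul_ite, Finset.sum_ite_eq'] using h
  have hU1 : U ≤ B.orthogonal U := by
    intro u hu
    rw [LinearMap.BilinForm.mem_orthogonal_iff]
    intro w hw
    show B w u = 0
    rw [hBsum]
    exact (hsd (L w)).mp hw (L u) hu
  have hU2 : B.orthogonal U ≤ U := by
    intro u hu
    rw [LinearMap.BilinForm.mem_orthogonal_iff] at hu
    show L u ∈ C
    rw [hsd]
    intro w hw
    have hwk : ∀ k : ℕ, (fun i => w ((σ ^ k) i)) ∈ C := by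
      intro k
      induction k with
      | zero => simpa using hw
      | succ k ih =>
        have h2 := hσC _ ih
        have h3 : ((fun i => w ((σ ^ k) i)) ∘ σ) = fun i => w ((σ ^ (k + 1)) i) := by
          funext i
          simp only [Function.comp_apply, pow_succ, Equiv.Perm.mul_apply]
        rwa [h3] at h2
    set Tw : Fin n → ZMod 2 := ∑ k ∈ Finset.range p, (fun i => w ((σ ^ k) i)) with hTw
    have hTwapp : ∀ i, Tw i = ∑ k ∈ Finset.range p, w ((σ ^ k) i) := by
      intro i
      rw [hTw, Finset.sum_apply]
    have hTwC : Tw ∈ C := Submodule.sum_mem C fun k _ => hwk k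
    have hTwinv : ∀ i, Tw (σ i) = Tw i := by
      intro i
      rw [hTwapp, hTwapp]
      have hswap : ∀ k, w ((σ ^ k) (σ i)) = w ((σ ^ (k + 1)) i) := by
        intro k
        rw [pow_succ, Equiv.Perm.mul_apply]
      rw [Finset.sum_congr rfl fun k _ => hswap k]
      have hfp : w ((σ ^ p) i) = w ((σ ^ 0) i) := by rw [hσp]; simp
      have h1 := Finset.sum_range_succ (fun k => w ((σ ^ k) i)) p
      have h2 := Finset.sum_range_succ' (fun k => w ((σ ^ k) i)) p
      have h4 := h1.symm.trans h2
      rw [hfp] at h4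
      exact (add_right_cancel h4).symm
    have hTworb : ∀ (k : ℕ) (i : Fin n), Tw ((σ ^ k) i) = Tw i := by
      intro k i
      induction k with
      | zero => rfl
      | succ k ih => rw [pow_succ', Equiv.Perm.mul_apply, hTwinv, ih]
    set t : Quotient s → ZMod 2 := fun ω => Tw ω.out with ht
    have hLt : L t = Tw := by
      funext i
      rw [hLapp]
      show Tw (mkq i).out = Tw i
      obtain ⟨k, hk⟩ := Quotient.exact (hout (mkq i))
      conv_rhs => rw [← hk]
      rw [hTworb]
    have htU : t ∈ U := by
      rw [hUmem, hLt]
      exact hTwC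
    have h0 : B t u = 0 := hu t htU
    rw [hBsum, hLt] at h0
    have hterm : ∀ k ∈ Finset.range p, ∑ i, L u i * w ((σ ^ k) i) = ∑ i, L u i * w i := by
      intro k _
      have hLuinv : ∀ i, L u ((σ ^ k) i) = L u i := fun i => by
        rw [hLapp, hLapp, hmkpow]
      refine Fintype.sum_equiv (σ ^ k) _ _ fun i => ?_
      rw [hLuinv]
    have hsum2 : ∑ i, L u i * Tw i = ∑ i, L u i * w i := by
      calc ∑ i, L u i * Tw i
          = ∑ i, ∑ k ∈ Finset.range p, L u i * w ((σ ^ k) i) := by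
            refine Finset.sum_congr rfl fun i _ => ?_
            rw [hTwapp, Finset.mul_sum]
        _ = ∑ k ∈ Finset.range p, ∑ i, L u i * w ((σ ^ k) i) := Finset.sum_comm
        _ = ∑ k ∈ Finset.range p, ∑ i, L u i * w i := Finset.sum_congr rfl hterm
        _ = p • (∑ i, L u i * w i) := by rw [Finset.sum_const, Finset.card_range]
        _ = ∑ i, L u i * w i := by
            rw [nsmul_eq_mul, hodd1 p (Nat.odd_iff.mp hodd), one_mul]
    rw [← hsum2]
    rw [show ∑ i, L u i * Tw i = ∑ i, Tw i * L u i from Finset.sum_congr rfl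
      fun i _ => mul_comm _ _]
    exact h0
  have hUeq : B.orthogonal U = U := le_antisymm hU2 hU1
  have hfinV : Module.finrank (ZMod 2) (Quotient s → ZMod 2) = 2 * c := by
    rw [Module.finrank_fintype_fun_eq_card, hΩcard]
  have hfinU : Module.finrank (ZMod 2) U = c := by
    have h := LinearMap.BilinForm.finrank_orthogonal hBnd U
    rw [hUeq, hfinV] at h
    have h2 : Module.finrank (ZMod 2) U ≤ 2 * c := hfinV ▸ Submodule.finrank_le U
    omega
  -- restriction to moved classes
  let Mv := {ω : Quotient s // ¬ σ ω.out = ω.out}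
  have hMvcard : Fintype.card Mv = c := by
    rw [Fintype.card_subtype]
    exact hmovΩc
  let q : U →ₗ[ZMod 2] (Mv → ZMod 2) :=
    (LinearMap.funLeft (ZMod 2) (ZMod 2) (Subtype.val : Mv → Quotient s)).comp U.subtype
  have hqapp : ∀ (u : U) (m : Mv), q u m = (u : Quotient s → ZMod 2) m.val :=
    fun u m => rfl
  have hcd : c < d := by omega
  have hker : ∀ u : U, q u = 0 → u = 0 := by
    intro u hqz
    have hsupp : ∀ i : Fin n, σ i ≠ i → L u.val i = 0 := by
      intro i hi
      have hmv := hmovcl i hi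
      have h1 : q u ⟨mkq i, hmv⟩ = 0 := by rw [hqz]; rfl
      rw [hqapp] at h1
      rw [hLapp]
      exact h1
    have hC : L u.val ∈ C := u.2
    by_cases hz : L u.val = 0
    · apply Subtype.ext
      funext ω
      have h2 : ((u : Quotient s → ZMod 2)) (mkq ω.out) = 0 := congrFun hz ω.out
      rw [hout] at h2
      exact h2
    · exfalso
      have hd2 := hmin.2 ⟨L u.val, hC, hz, rfl⟩
      have hnorm : hammingNorm (L u.val) ≤ c := by
        rw [← hFixc]
        apply Finset.card_le_card
        intro i hi
        simp only [hammingNorm, Finset.mem_filter, Finset.mem_univ, true_and] at hi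
        refine Finset.mem_filter.mpr ⟨Finset.mem_univ _, ?_⟩
        by_contra hfx
        exact hi (hsupp i hfx)
      omega
  have hqinj : Function.Injective q := by
    intro u1 u2 he
    have h := hker (u1 - u2) (by rw [map_sub, he, sub_self])
    exact sub_eq_zero.mp h
  have hqsurj : Function.Surjective q := by
    have hfr : Module.finrank (ZMod 2) U = Module.finrank (ZMod 2) (Mv → ZMod 2) := by
      rw [hfinU, Module.finrank_fintype_fun_eq_card, hMvcard]
    exact (LinearMap.injective_iff_surjective_of_finrank_eq_finrank hfr).mp hqinj
  obtain ⟨i0, hi0⟩ : ∃ i : Fin n, σ i ≠ i := by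
    by_contra h
    push_neg at h
    have h1 : σ = 1 := Equiv.ext fun i => h i
    rw [h1, orderOf_one] at hord
    omega
  let m0 : Mv := ⟨mkq i0, hmovcl i0 hi0⟩
  obtain ⟨uu, huu⟩ := hqsurj (Pi.single m0 1)
  set v : Fin n → ZMod 2 := L uu.val with hv
  have hvC : v ∈ C := uu.2
  have hv0 : v i0 = 1 := by
    have h := congrFun huu m0
    rw [Pi.single_eq_same] at h
    exact h
  have hvne : v ≠ 0 := by
    intro h
    rw [h] at hv0
    simp at hv0
  have hvsupp : ∀ i : Fin n, v i ≠ 0 → i ∈ Fixs ∪ orb i0 := by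
    intro i hvi
    by_cases hfx : σ i = i
    · exact Finset.mem_union_left _ (Finset.mem_filter.mpr ⟨Finset.mem_univ _, hfx⟩)
    · apply Finset.mem_union_right
      have hmv := hmovcl i hfx
      have h1 := congrFun huu ⟨mkq i, hmv⟩
      by_cases he : (⟨mkq i, hmv⟩ : Mv) = m0
      · have h3 : mkq i = mkq i0 := congrArg Subtype.val he
        rw [← hfiber i0]
        exact Finset.mem_filter.mpr ⟨Finset.mem_univ _, h3⟩
      · rw [Pi.single_eq_of_ne he] at h1
        exact absurd (show v i = 0 from h1) hvi
  have hnormv : hammingNorm v ≤ c + p := by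
    have h1 : hammingNorm v ≤ (Fixs ∪ orb i0).card := by
      apply Finset.card_le_card
      intro i hi
      simp only [hammingNorm, Finset.mem_filter, Finset.mem_univ, true_and] at hi
      exact hvsupp i hi
    calc hammingNorm v ≤ (Fixs ∪ orb i0).card := h1
      _ ≤ Fixs.card + (orb i0).card := Finset.card_union_le _ _
      _ = c + p := by rw [hFixc, horbcard i0 hi0]
  have hd3 := hmin.2 ⟨v, hvC, hvne, rfl⟩
  omega
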